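/- arXiv:1405.4782 — 8 statements merged into one kernel-verified Lean document; each statement's English description precedes it below -/
import Mathlib

section
/- Let H : ℝ → ℝ be a distribution function (monotone nondecreasing, right-continuous, tending to 0 at −∞ and to 1 at +∞), and let μ be a probability measure on [0,∞) with μ({0}) = 0. Define F(x) = ∫₀^∞ H(x)^t dμ(t), with the convention that H(x)^t = 0 when H(x) = 0 and t > 0. Then F is again a distribution function: it is monotone nondecreasing, right-continuous, tends to 0 at −∞ and to 1 at +∞. -/
open MeasureTheory Filter Topology Set

/-- A distribution function on `ℝ`: monotone nondecreasing, right-continuous,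
tending to `0` at `−∞` and to `1` at `+∞`. -/
def IsDF (H : ℝ → ℝ) : Prop :=
  Monotone H ∧ (∀ x, ContinuousWithinAt H (Ici x) x) ∧
    Tendsto H atBot (𝓝 0) ∧ Tendsto H atTop (𝓝 1)

/-- If `H` is a distribution function and `μ` a probability measure on `[0,∞)` with
`μ({0}) = 0`, then the power mixture `F(x) = ∫ H(x)^t dμ(t)` (with `H(x)^t = 0` when
`H(x) = 0` and `t > 0`, as is the case for `Real.rpow`) is again a distribution function. -/
theorem isDF_integral_rpow
    (H : ℝ → ℝ) (hH : IsDF H)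
    (μ : Measure ℝ) [IsProbabilityMeasure μ] (hμ : μ (Iio 0) = 0) (hμ0 : μ {0} = 0)
    (F : ℝ → ℝ) (hF : ∀ x, F x = ∫ t, H x ^ t ∂μ) :
    IsDF F := by
  obtain ⟨hmono, hrc, hbot, htop⟩ := hH
  -- a.e. t > 0
  have hpos : ∀ᵐ t ∂μ, 0 < t := by
    have : μ (Iic 0) = 0 := by
      have : μ (Iic 0) ≤ μ (Iio 0) + μ {0} := by
        rw [← Iio_union_right]; exact measure_union_le _ _
      simpa [hμ, hμ0] using this
    have := measure_eq_zero_iff_ae_notMem.mp this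
    filter_upwards [this] with t ht
    simpa [not_le] using ht
  -- bounds on H
  have hH0 : ∀ x, 0 ≤ H x := fun x =>
    le_of_tendsto hbot (eventually_atBot.mpr ⟨x, fun y hy => hmono hy⟩)
  have hH1 : ∀ x, H x ≤ 1 := fun x =>
    ge_of_tendsto htop (eventually_atTop.mpr ⟨x, fun y hy => hmono hy⟩)
  have hmeas : ∀ x, AEStronglyMeasurable (fun t => H x ^ t) μ :=
    fun x => (measurable_const.pow measurable_id).aestronglyMeasurable
  have hbound : ∀ x, ∀ᵐ t ∂μ, ‖H x ^ t‖ ≤ (1 : ℝ) := by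
    intro x
    filter_upwards [hpos] with t ht
    rw [Real.norm_eq_abs, abs_of_nonneg (Real.rpow_nonneg (hH0 x) t)]
    exact Real.rpow_le_one (hH0 x) (hH1 x) ht.le
  have hint : ∀ x, Integrable (fun t => H x ^ t) μ := fun x =>
    Integrable.mono' (integrable_const 1) (hmeas x) (hbound x)
  refine ⟨?_, ?_, ?_, ?_⟩
  · -- monotone
    intro x y hxy
    rw [hF x, hF y]
    refine integral_mono_ae (hint x) (hint y) ?_
    filter_upwards [hpos] with t ht
    exact Real.rpow_le_rpow (hH0 x) (hmono hxy) ht.le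
  · -- right continuity
    intro x
    have : Tendsto (fun y => ∫ t, H y ^ t ∂μ) (𝓝[≥] x) (𝓝 (∫ t, H x ^ t ∂μ)) := by
      refine tendsto_integral_filter_of_dominated_convergence (fun _ => (1 : ℝ))
        (Eventually.of_forall hmeas) (Eventually.of_forall hbound)
        (integrable_const 1) ?_
      filter_upwards [hpos] with t ht
      have hc : ContinuousAt (fun b : ℝ => b ^ t) (H x) :=
        Real.continuousAt_rpow_const _ _ (Or.inr ht.le)
      exact hc.tendsto.comp (hrc x)
    have h2 : Tendsto F (𝓝[≥] x) (𝓝 (F x)) := by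
      rw [hF x]
      exact this.congr fun y => (hF y).symm
    exact h2.mono_left (nhdsWithin_mono _ le_rfl)
  · -- atBot
    have : Tendsto (fun x => ∫ t, H x ^ t ∂μ) atBot (𝓝 (∫ t, (0 : ℝ) ∂μ)) := by
      refine tendsto_integral_filter_of_dominated_convergence (fun _ => (1 : ℝ))
        (Eventually.of_forall hmeas) (Eventually.of_forall hbound)
        (integrable_const 1) ?_
      filter_upwards [hpos] with t ht
      have hc : ContinuousAt (fun b : ℝ => b ^ t) 0 :=
        Real.continuousAt_rpow_const _ _ (Or.inr ht.le)
      have := hc.tendsto.comp hbot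
      simpa [Function.comp_def, Real.zero_rpow ht.ne'] using this
    simp only [integral_zero] at this
    exact this.congr fun x => (hF x).symm
  · -- atTop
    have : Tendsto (fun x => ∫ t, H x ^ t ∂μ) atTop (𝓝 (∫ t, (1 : ℝ) ∂μ)) := by
      refine tendsto_integral_filter_of_dominated_convergence (fun _ => (1 : ℝ))
        (Eventually.of_forall hmeas) (Eventually.of_forall hbound)
        (integrable_const 1) ?_
      filter_upwards [hpos] with t ht
      have hc : ContinuousAt (fun b : ℝ => b ^ t) 1 :=
        Real.continuousAt_rpow_const _ _ (Or.inl one_ne_zero)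
      have := hc.tendsto.comp htop
      simpa [Function.comp_def, Real.one_rpow] using this
    rw [integral_const, probReal_univ] at this
    simp only [ENNReal.toReal_one, one_smul] at this
    exact this.congr fun x => (hF x).symm
end

section
/- Let φ : [0,∞) → (0,1] be a continuous, strictly decreasing bijection from [0,∞) onto (0,1] with φ(0) = 1, and suppose φ is differentiable at 0 with derivative φ'(0) = −1. Denote by φ⁻¹ : (0,1] → [0,∞) the inverse bijection. Then for every s ≥ 0, φ⁻¹(exp(−s·θ))/θ → s as θ → 0⁺, and consequently φ(φ⁻¹(exp(−s·θ))/θ) → φ(s) as θ → 0⁺. -/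
open Filter Topology Set

/-- If `φ : [0,∞) → (0,1]` is a continuous strictly decreasing bijection with `φ(0) = 1`
and (one-sided) derivative `−1` at `0`, and `ψ` is its inverse, then for every `s ≥ 0`,
`ψ(exp(−sθ))/θ → s` and `φ(ψ(exp(−sθ))/θ) → φ(s)` as `θ → 0⁺`. -/
theorem tendsto_inv_comp_exp_div
    (φ : ℝ → ℝ)
    (hcont : ContinuousOn φ (Ici 0))
    (hanti : StrictAntiOn φ (Ici 0))
    (hbij : BijOn φ (Ici 0) (Ioc 0 1))
    (h0 : φ 0 = 1)
    (hderiv : HasDerivWithinAt φ (-1) (Ici 0) 0)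
    (ψ : ℝ → ℝ)
    (hψφ : ∀ s ∈ Ici (0 : ℝ), ψ (φ s) = s)
    (hφψ : ∀ u ∈ Ioc (0 : ℝ) 1, φ (ψ u) = u)
    (s : ℝ) (hs : 0 ≤ s) :
    Tendsto (fun θ : ℝ => ψ (Real.exp (-(s * θ))) / θ) (𝓝[>] 0) (𝓝 s) ∧
      Tendsto (fun θ : ℝ => φ (ψ (Real.exp (-(s * θ))) / θ)) (𝓝[>] 0) (𝓝 (φ s)) := by
  have hψ_mem : ∀ u ∈ Ioc (0:ℝ) 1, ψ u ∈ Ici (0:ℝ) := by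
    intro u hu
    obtain ⟨x, hx, rfl⟩ := hbij.surjOn hu
    rw [hψφ x hx]; exact hx
  have hψ1 : ψ 1 = 0 := by rw [← h0]; exact hψφ 0 self_mem_Ici
  -- first limit
  have main : Tendsto (fun θ : ℝ => ψ (Real.exp (-(s * θ))) / θ) (𝓝[>] 0) (𝓝 s) := by
    rcases eq_or_lt_of_le hs with rfl | hspos
    · simp [hψ1]
    · set t : ℝ → ℝ := fun θ => ψ (Real.exp (-(s * θ))) with ht
      have hexp_mem : ∀ θ : ℝ, θ ∈ Ioi (0:ℝ) → Real.exp (-(s * θ)) ∈ Ioc (0:ℝ) 1 := by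
        intro θ hθ
        refine ⟨Real.exp_pos _, Real.exp_le_one_iff.2 ?_⟩
        nlinarith [mul_pos hspos (mem_Ioi.1 hθ)]
      have htpos : ∀ θ : ℝ, θ ∈ Ioi (0:ℝ) → t θ ∈ Ioi (0:ℝ) := by
        intro θ hθ
        have hmem := hexp_mem θ hθ
        have h1 : t θ ∈ Ici (0:ℝ) := hψ_mem _ hmem
        rcases eq_or_lt_of_le (mem_Ici.1 h1) with heq | h; swap
        · exact h
        · exfalso
          have : φ (t θ) = Real.exp (-(s * θ)) := hφψ _ hmem
          rw [← heq, h0] at this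
          have : Real.exp (-(s * θ)) < 1 := by
            rw [Real.exp_lt_one_iff]
            nlinarith [mul_pos hspos (mem_Ioi.1 hθ)]
          linarith [this, (hφψ _ hmem)]
      -- t tends to 0 within Ioi 0
      have httend : Tendsto t (𝓝[>] (0:ℝ)) (𝓝[>] (0:ℝ)) := by
        rw [tendsto_nhdsWithin_iff]
        constructor
        · rw [Metric.tendsto_nhdsWithin_nhds]
          intro ε hε
          have hφε : φ ε < 1 := by
            rw [← h0]; exact hanti self_mem_Ici (le_of_lt hε) hε
          -- eventually exp(-(s θ)) > φ ε
          have hcontexp : Tendsto (fun θ : ℝ => Real.exp (-(s * θ))) (𝓝 0) (𝓝 1) := by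
            have : Continuous fun θ : ℝ => Real.exp (-(s * θ)) := by continuity
            simpa using this.tendsto 0
          have hev : ∀ᶠ θ in 𝓝 (0:ℝ), Real.exp (-(s * θ)) > φ ε :=
            hcontexp.eventually (eventually_gt_nhds hφε)
          rcases Metric.eventually_nhds_iff.1 hev with ⟨δ, hδ, hδ'⟩
          refine ⟨δ, hδ, ?_⟩
          intro θ hθ hdist
          have hgt : Real.exp (-(s * θ)) > φ ε := hδ' hdist
          have hmem := hexp_mem θ hθ
          have htθ : t θ ∈ Ici (0:ℝ) := hψ_mem _ hmem
          have : t θ < ε := by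
            by_contra hcon
            push_neg at hcon
            rcases eq_or_lt_of_le hcon with heq | hlt
            · have hh := hφψ _ hmem
              rw [heq] at hgt
              linarith
            · have := hanti (le_of_lt hε) htθ hlt
              rw [hφψ _ hmem] at this
              linarith
          rw [Real.dist_eq, sub_zero, abs_of_nonneg (mem_Ici.1 htθ)]
          exact this
        · exact eventually_nhdsWithin_of_forall htpos
      -- slope of φ at 0 reciprocal
      have hslope : Tendsto (fun x : ℝ => (φ x - 1) / x) (𝓝[>] (0:ℝ)) (𝓝 (-1)) := by
        have := hasDerivWithinAt_iff_tendsto_slope.1 hderiv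
        have hsub : (𝓝[>] (0:ℝ)) ≤ 𝓝[Ici 0 \ {0}] (0:ℝ) := by
          apply nhdsWithin_mono
          intro x hx
          exact ⟨mem_Ici.2 (le_of_lt hx), ne_of_gt hx⟩
        have := this.mono_left hsub
        refine this.congr ?_
        intro x
        simp [slope_def_field, div_eq_div_iff]
        ring_nf
        rw [h0]
        ring_nf
      have hrecip : Tendsto (fun x : ℝ => x / (φ x - 1)) (𝓝[>] (0:ℝ)) (𝓝 (-1)) := by
        have h1 : Tendsto (fun x : ℝ => ((φ x - 1) / x)⁻¹) (𝓝[>] (0:ℝ)) (𝓝 ((-1:ℝ))⁻¹) :=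
          hslope.inv₀ (by norm_num)
        simp only [inv_neg, inv_one] at h1
        refine h1.congr' ?_
        filter_upwards [self_mem_nhdsWithin] with x hx
        rw [inv_div]
      have hC : Tendsto (fun θ : ℝ => t θ / (φ (t θ) - 1)) (𝓝[>] (0:ℝ)) (𝓝 (-1)) :=
        hrecip.comp httend
      -- exp slope
      have hD : Tendsto (fun θ : ℝ => (Real.exp (-(s * θ)) - 1) / θ) (𝓝[>] (0:ℝ)) (𝓝 (-s)) := by
        have hd : HasDerivAt (fun θ : ℝ => Real.exp (-(s * θ))) (-s) 0 := by
          have h1 : HasDerivAt (fun θ : ℝ => -(s * θ)) (-s) 0 := by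
            simpa [Pi.neg_def] using ((hasDerivAt_id (0:ℝ)).const_mul s).neg
          simpa [Function.comp_def] using (Real.hasDerivAt_exp (-(s * 0))).comp 0 h1
        have := hasDerivAt_iff_tendsto_slope.1 hd
        have hsub : (𝓝[>] (0:ℝ)) ≤ 𝓝[≠] (0:ℝ) := nhdsWithin_mono _ (fun x hx => ne_of_gt hx)
        have := this.mono_left hsub
        refine this.congr ?_
        intro x
        simp [slope_def_field]
      -- combine
      have hprod : Tendsto (fun θ : ℝ => (t θ / (φ (t θ) - 1)) * ((Real.exp (-(s * θ)) - 1) / θ))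
          (𝓝[>] (0:ℝ)) (𝓝 s) := by
        have := hC.mul hD
        simpa using this
      refine hprod.congr' ?_
      filter_upwards [self_mem_nhdsWithin] with θ hθ
      have hmem := hexp_mem θ hθ
      have hne : φ (t θ) - 1 ≠ 0 := by
        have h1 : φ (t θ) < 1 := by
          rw [← h0]
          exact hanti self_mem_Ici (mem_Ici.2 (le_of_lt (htpos θ hθ))) (htpos θ hθ)
        linarith
      have hφeq := hφψ _ hmem
      have hne' : Real.exp (-(s * θ)) - 1 ≠ 0 := by rw [← hφeq]; exact hne
      rw [hφeq]
      field_simp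
      rfl
  refine ⟨main, ?_⟩
  -- second limit: compose with continuity of φ at s within Ici 0
  have hcont_s : ContinuousWithinAt φ (Ici 0) s := hcont s hs
  have hmaps : Tendsto (fun θ : ℝ => ψ (Real.exp (-(s * θ))) / θ) (𝓝[>] 0) (𝓝[Ici 0] s) := by
    rw [tendsto_nhdsWithin_iff]
    refine ⟨main, ?_⟩
    filter_upwards [self_mem_nhdsWithin] with θ hθ
    have hmem : Real.exp (-(s * θ)) ∈ Ioc (0:ℝ) 1 := by
      refine ⟨Real.exp_pos _, Real.exp_le_one_iff.2 ?_⟩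
      nlinarith [mul_nonneg hs (le_of_lt (mem_Ioi.1 hθ))]
    exact div_nonneg (mem_Ici.1 (hψ_mem _ hmem)) (le_of_lt hθ)
  exact hcont_s.tendsto.comp hmaps
end

section
/- Let μ be a probability measure on [0,∞) with μ({0}) = 0, and let φ(s) = ∫₀^∞ exp(−s·t) dμ(t) be its Laplace transform. Let H : ℝ → ℝ be a distribution function (monotone nondecreasing, right-continuous, tending to 0 at −∞ and to 1 at +∞). For each n ≥ 1 define G_n(x) = max(0, 1 + log(H(x))/n), with the convention G_n(x) = 0 when H(x) = 0. Then each G_n is a distribution function, and for every x ∈ ℝ, φ(n·(1 − G_n(x))) converges as n → ∞ to ∫₀^∞ H(x)^t dμ(t) (with the convention H(x)^t = 0 when H(x) = 0 and t > 0). -/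
open MeasureTheory Filter Topology Set

/-- Constructive half of the de Finetti-type theorem: for a distribution function `H`,
a probability measure `μ` on `[0,∞)` with `μ({0}) = 0` with Laplace transform `φ`, and
`Gₙ(x) = max(0, 1 + log H(x)/n)` (with `Gₙ(x) = 0` when `H(x) = 0`), each `Gₙ` is a
distribution function and `φ(n(1 − Gₙ(x))) → ∫ H(x)^t dμ(t)` for every `x`. -/
theorem deFinetti_sufficiency
    (μ : Measure ℝ) [IsProbabilityMeasure μ] (hμ : μ (Iio 0) = 0) (hμ0 : μ {0} = 0)
    (H : ℝ → ℝ) (hH : IsDF H)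
    (G : ℕ → ℝ → ℝ)
    (hG : ∀ n x, G n x = if H x = 0 then 0 else max 0 (1 + Real.log (H x) / n)) :
    (∀ n : ℕ, 1 ≤ n → IsDF (G n)) ∧
      ∀ x, Tendsto (fun n : ℕ => ∫ t, Real.exp (-((n : ℝ) * (1 - G n x)) * t) ∂μ)
        atTop (𝓝 (∫ t, H x ^ t ∂μ)) := by
  obtain ⟨hmono, hrc, hbot, htop⟩ := hH
  have hH0 : ∀ x, 0 ≤ H x := fun x =>
    le_of_tendsto hbot (eventually_atBot.2 ⟨x, fun y hy => hmono hy⟩)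
  have hH1 : ∀ x, H x ≤ 1 := fun x =>
    ge_of_tendsto htop (eventually_atTop.2 ⟨x, fun y hy => hmono hy⟩)
  constructor
  · intro n hn
    have hn0 : (0:ℝ) < n := by exact_mod_cast Nat.lt_of_lt_of_le Nat.zero_lt_one hn
    -- key : small values of H force G n = 0
    have key : ∀ y, H y < Real.exp (-(n:ℝ)) → G n y = 0 := by
      intro y hy
      rw [hG]
      split_ifs with h
      · rfl
      · have hypos : 0 < H y := (hH0 y).lt_of_ne (Ne.symm h)
        have hlt : Real.log (H y) < -(n:ℝ) := by
          calc Real.log (H y) < Real.log (Real.exp (-(n:ℝ))) := Real.log_lt_log hypos hy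
          _ = -(n:ℝ) := Real.log_exp _
        have hdiv : Real.log (H y) / n ≤ -1 := by
          rw [div_le_iff₀ hn0]; linarith
        exact max_eq_left (by linarith)
    refine ⟨?_, ?_, ?_, ?_⟩
    · -- monotone
      intro a b hab
      by_cases ha : H a = 0
      · rw [hG n a, if_pos ha, hG n b]
        split_ifs with h
        · exact le_refl 0
        · exact le_max_left _ _
      · have hapos : 0 < H a := (hH0 a).lt_of_ne (Ne.symm ha)
        have hbpos : 0 < H b := lt_of_lt_of_le hapos (hmono hab)
        rw [hG n a, if_neg ha, hG n b, if_neg (ne_of_gt hbpos)]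
        gcongr
        exact hmono hab
    · -- right continuity
      intro x
      by_cases hx : H x = 0
      · have hGx : G n x = 0 := by rw [hG, if_pos hx]
        have hev : ∀ᶠ y in 𝓝[Ici x] x, G n y = 0 := by
          have hsmall : ∀ᶠ y in 𝓝[Ici x] x, H y < Real.exp (-(n:ℝ)) :=
            (hrc x).eventually (eventually_lt_nhds (by rw [hx]; positivity))
          exact hsmall.mono fun y hy => key y hy
        have : Tendsto (G n) (𝓝[Ici x] x) (𝓝 0) :=
          Filter.Tendsto.congr' (hev.mono fun y hy => hy.symm) tendsto_const_nhds
        unfold ContinuousWithinAt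
        rwa [hGx]
      · have hxpos : 0 < H x := (hH0 x).lt_of_ne (Ne.symm hx)
        have hcont : ContinuousWithinAt (fun y => max 0 (1 + Real.log (H y) / n)) (Ici x) x :=
          continuousWithinAt_const.max
            (continuousWithinAt_const.add
              (((Real.continuousAt_log (ne_of_gt hxpos)).comp_continuousWithinAt (hrc x)).div_const _))
        refine hcont.congr ?_ ?_
        · intro y hy
          rw [hG, if_neg (ne_of_gt (lt_of_lt_of_le hxpos (hmono hy)))]
        · rw [hG, if_neg (ne_of_gt hxpos)]
    · -- atBot
      have hsmall : ∀ᶠ y in atBot, H y < Real.exp (-(n:ℝ)) :=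
        hbot.eventually (eventually_lt_nhds (by positivity))
      exact Filter.Tendsto.congr' ((hsmall.mono fun y hy => key y hy).mono fun y hy => hy.symm)
        tendsto_const_nhds
    · -- atTop
      have hev : ∀ᶠ y in atTop, 0 < H y := htop.eventually (eventually_gt_nhds zero_lt_one)
      have hcont : ContinuousAt (fun h : ℝ => max 0 (1 + Real.log h / n)) 1 :=
        continuousAt_const.max
          (continuousAt_const.add ((Real.continuousAt_log one_ne_zero).div_const _))
      have h1 : Tendsto (fun y => max 0 (1 + Real.log (H y) / n)) atTop (𝓝 1) := by
        have := hcont.tendsto.comp htop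
        simpa [Function.comp_def, Real.log_one, max_eq_right zero_le_one] using this
      refine Filter.Tendsto.congr' (hev.mono fun y hy => ?_) h1
      rw [hG, if_neg (ne_of_gt hy)]
  · intro x
    by_cases hx : H x = 0
    · -- limit is 0
      have hGx : ∀ m : ℕ, G m x = 0 := fun m => by rw [hG, if_pos hx]
      have hInt : ∫ t, H x ^ t ∂μ = 0 := by
        rw [hx]
        have h0 : ∀ᵐ t ∂μ, (0:ℝ) ^ t = (0:ℝ) := by
          have hne : ∀ᵐ t ∂μ, t ≠ 0 := by
            rw [ae_iff]; simpa using hμ0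
          filter_upwards [hne] with t ht using Real.zero_rpow ht
        calc ∫ t, (0:ℝ) ^ t ∂μ = ∫ _t, (0:ℝ) ∂μ := integral_congr_ae h0
        _ = 0 := integral_zero _ _
      rw [hInt]
      simp only [hGx, sub_zero, mul_one]
      have hIic : μ (Iic (0:ℝ)) = 0 := by
        have hU : Iic (0:ℝ) = Iio 0 ∪ {0} := by
          ext t; simp [le_iff_lt_or_eq]
        refine le_antisymm ?_ zero_le
        rw [hU]
        calc μ (Iio 0 ∪ {0}) ≤ μ (Iio 0) + μ {0} := measure_union_le _ _
        _ = 0 := by rw [hμ, hμ0, add_zero]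
      have hpos : ∀ᵐ t ∂μ, 0 < t := by
        rw [ae_iff]
        have : {t : ℝ | ¬ 0 < t} = Iic 0 := by ext t; simp
        rw [this]; exact hIic
      have key : Tendsto (fun n : ℕ => ∫ t, Real.exp (-(n:ℝ) * t) ∂μ) atTop
          (𝓝 (∫ _t, (0:ℝ) ∂μ)) := by
        refine tendsto_integral_of_dominated_convergence (fun _ => (1:ℝ))
          (fun m => Continuous.aestronglyMeasurable (by fun_prop)) (integrable_const 1)
          ?_ ?_
        · intro m
          filter_upwards [hpos] with t ht
          rw [Real.norm_eq_abs, Real.abs_exp, Real.exp_le_one_iff]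
          have : 0 ≤ (m:ℝ) * t := mul_nonneg (Nat.cast_nonneg m) ht.le
          linarith
        · filter_upwards [hpos] with t ht
          have h1 : Tendsto (fun m : ℕ => (m:ℝ) * t) atTop atTop :=
            tendsto_natCast_atTop_atTop.atTop_mul_const ht
          have h2 : Tendsto (fun m : ℕ => -((m:ℝ) * t)) atTop atBot :=
            tendsto_neg_atTop_atBot.comp h1
          have h3 : Tendsto (fun m : ℕ => Real.exp (-((m:ℝ) * t))) atTop (𝓝 0) :=
            Real.tendsto_exp_atBot.comp h2
          simpa [neg_mul] using h3
      simpa using key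
    · have hxpos : 0 < H x := (hH0 x).lt_of_ne (Ne.symm hx)
      have hev : ∀ᶠ n : ℕ in atTop,
          (∫ t, Real.exp (-((n:ℝ) * (1 - G n x)) * t) ∂μ) = ∫ t, H x ^ t ∂μ := by
        filter_upwards [eventually_ge_atTop (⌈-Real.log (H x)⌉₊ + 1)] with n hn
        have hn1 : 1 ≤ n := le_trans (Nat.le_add_left 1 _) hn
        have hn0 : (0:ℝ) < n := by exact_mod_cast hn1
        have hnL : -Real.log (H x) ≤ (n:ℝ) := by
          calc -Real.log (H x) ≤ (⌈-Real.log (H x)⌉₊ : ℝ) := Nat.le_ceil _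
          _ ≤ n := by exact_mod_cast le_trans (Nat.le_add_right _ 1) hn
        have hmax : (0:ℝ) ≤ 1 + Real.log (H x) / n := by
          have : -1 ≤ Real.log (H x) / n := by
            rw [le_div_iff₀ hn0]; linarith
          linarith
        have hGn : G n x = 1 + Real.log (H x) / n := by
          rw [hG, if_neg hx]; exact max_eq_right hmax
        have harg : (n:ℝ) * (1 - G n x) = -Real.log (H x) := by
          rw [hGn]; field_simp; ring
        rw [harg]
        refine integral_congr_ae (Eventually.of_forall fun t => ?_)
        rw [neg_neg, Real.rpow_def_of_pos hxpos]
      exact Filter.Tendsto.congr' (hev.mono fun n h => h.symm) tendsto_const_nhds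
end

section
/- For each n ≥ 1 let ν_n be a probability measure on ℕ, and suppose the pushforward of ν_n under the map k ↦ k/n converges weakly (in the topology of weak convergence of probability measures on ℝ) to a probability measure μ with μ((−∞,0)) = 0. Let (u_n) be a sequence of real numbers with 0 ≤ u_n ≤ 1 such that u_n^n → h for some h with 0 < h ≤ 1. Then ∑_{k=0}^∞ u_n^k · ν_n({k}) converges as n → ∞ to ∫₀^∞ h^t dμ(t), where h^t = exp(t·log h). -/
open MeasureTheory Filter Topology Set

/-- truncated exponential, bounded continuous -/
noncomputable def TTG (c : ℝ) : BoundedContinuousFunction ℝ ℝ :=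
  BoundedContinuousFunction.mkOfBound
    ⟨fun x => min 1 (Real.exp (max x 0 * c)), by
      exact continuous_const.min (Real.continuous_exp.comp ((continuous_id.max continuous_const).mul continuous_const))⟩
    1 (by
      intro x y
      have key : ∀ z : ℝ, min 1 (Real.exp (max z 0 * c)) ∈ Icc (0:ℝ) 1 :=
        fun z => ⟨le_min zero_le_one (Real.exp_pos _).le, min_le_left _ _⟩
      simpa using Real.dist_le_of_mem_Icc (key x) (key y))

lemma TTG_apply (c x : ℝ) : TTG c x = min 1 (Real.exp (max x 0 * c)) := rfl

lemma TTG_mem (c x : ℝ) : TTG c x ∈ Icc (0:ℝ) 1 :=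
  ⟨le_min zero_le_one (Real.exp_pos _).le, min_le_left _ _⟩

lemma summable_meas (ν : Measure ℕ) [IsProbabilityMeasure ν] :
    Summable (fun k : ℕ => (ν {k}).toReal) := by
  apply ENNReal.summable_toReal
  have : (∑' k : ℕ, ν {k}) = ν univ := by
    have := Measure.tsum_indicator_apply_singleton ν univ MeasurableSet.univ
    simpa using this
  simp [this]

lemma integral_TTG (ν : Measure ℕ) [IsProbabilityMeasure ν] (n : ℕ) (c : ℝ) :
    ∫ x, TTG c x ∂(Measure.map (fun k : ℕ => (k : ℝ) / n) ν)
      = ∑' k : ℕ, TTG c ((k : ℝ) / n) * (ν {k}).toReal := by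
  rw [integral_map (measurable_from_top (f := fun k : ℕ => (k : ℝ) / n)).aemeasurable
    ((TTG c).continuous.aestronglyMeasurable)]
  have hint : Integrable (fun k : ℕ => TTG c ((k : ℝ) / n)) ν := by
    apply (integrable_const (1:ℝ)).mono' (measurable_from_top.aestronglyMeasurable)
    refine Filter.Eventually.of_forall fun k => ?_
    rw [Real.norm_eq_abs, abs_of_nonneg (TTG_mem c _).1]
    exact (TTG_mem c _).2
  rw [integral_countable' hint]
  congr 1; ext k; rw [smul_eq_mul, mul_comm]; rfl


/-- Pointwise transfer theorem for maxima: if `νₙ` are probability laws on `ℕ` whose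
pushforwards under `k ↦ k/n` converge weakly to a probability measure `μ` on `[0,∞)`,
and `uₙ ∈ [0,1]` with `uₙⁿ → h`, `0 < h ≤ 1`, then the random maximum probabilities
`∑ₖ uₙᵏ νₙ({k})` converge to `∫ h^t dμ(t)` where `h^t = exp(t·log h)`. -/
theorem transfer_theorem_for_maxima
    (ν : ℕ → Measure ℕ) [∀ n, IsProbabilityMeasure (ν n)]
    (μ : Measure ℝ) [IsProbabilityMeasure μ] (hμ : μ (Iio 0) = 0)
    (hweak : ∀ f : BoundedContinuousFunction ℝ ℝ,
      Tendsto (fun n : ℕ => ∫ x, f x ∂(Measure.map (fun k : ℕ => (k : ℝ) / n) (ν n)))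
        atTop (𝓝 (∫ x, f x ∂μ)))
    (u : ℕ → ℝ) (hu : ∀ n, 0 ≤ u n ∧ u n ≤ 1)
    (h : ℝ) (h0 : 0 < h) (h1 : h ≤ 1)
    (hpow : Tendsto (fun n : ℕ => u n ^ n) atTop (𝓝 h)) :
    Tendsto (fun n : ℕ => ∑' k : ℕ, u n ^ k * ((ν n) {k}).toReal)
      atTop (𝓝 (∫ t, Real.exp (t * Real.log h) ∂μ)) := by
  set L := Real.log h with hL
  have hLle : L ≤ 0 := Real.log_nonpos h0.le h1
  -- Step A : ∫ TTG L dμ = target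
  have hae : ∀ᵐ x ∂μ, (0:ℝ) ≤ x := by
    rw [ae_iff]
    convert hμ using 2
    ext x; simp [Iio]
  have stepA : ∫ x, TTG L x ∂μ = ∫ t, Real.exp (t * L) ∂μ := by
    refine integral_congr_ae ?_
    filter_upwards [hae] with x hx
    rw [TTG_apply, max_eq_left hx, min_eq_right]
    exact Real.exp_le_one_iff.2 (mul_nonpos_of_nonneg_of_nonpos hx hLle)
  -- Step B : continuity in c
  have stepB : Tendsto (fun c => ∫ x, TTG c x ∂μ) (𝓝 L) (𝓝 (∫ x, TTG L x ∂μ)) := by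
    refine tendsto_integral_filter_of_dominated_convergence (fun _ => (1:ℝ))
      (Filter.Eventually.of_forall fun c => (TTG c).continuous.aestronglyMeasurable)
      (Filter.Eventually.of_forall fun c => Filter.Eventually.of_forall fun x => ?_)
      (integrable_const 1)
      (Filter.Eventually.of_forall fun x => ?_)
    · rw [Real.norm_eq_abs, abs_of_nonneg (TTG_mem c x).1]; exact (TTG_mem c x).2
    · have : Continuous fun c => TTG c x := by
        simp only [TTG_apply]
        exact continuous_const.min (Real.continuous_exp.comp (continuous_const.mul continuous_id))
      exact this.tendsto L
  -- n log u n → L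
  have hlog : Tendsto (fun n : ℕ => (n : ℝ) * Real.log (u n)) atTop (𝓝 L) := by
    have h2 := ((Real.continuousAt_log (ne_of_gt h0)).tendsto).comp hpow
    have heq : (fun n : ℕ => Real.log (u n ^ n)) = fun n : ℕ => (n:ℝ) * Real.log (u n) := by
      funext m; rw [Real.log_pow]
    rw [hL, ← heq]
    exact h2
  rw [← stepA]
  rw [Metric.tendsto_atTop]
  intro ε hε
  obtain ⟨δ, hδ0, hδ⟩ : ∃ δ > 0, ∀ c : ℝ, dist c L < δ →
      dist (∫ x, TTG c x ∂μ) (∫ x, TTG L x ∂μ) < ε / 2 := by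
    have := Metric.tendsto_nhds.1 stepB (ε/2) (by linarith)
    exact Metric.eventually_nhds_iff.1 this
  set c₁ := L - δ/2 with hc₁
  set c₂ := L + δ/2 with hc₂
  have hdist1 : dist c₁ L < δ := by rw [Real.dist_eq]; rw [hc₁]; rw [abs_of_nonpos] <;> [skip; linarith] ; linarith
  have hdist2 : dist c₂ L < δ := by rw [Real.dist_eq]; rw [hc₂]; rw [abs_of_nonneg] <;> [skip; linarith] ; linarith
  obtain ⟨N1, hN1⟩ := Metric.tendsto_atTop.1 (hweak (TTG c₁)) (ε/2) (by linarith)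
  obtain ⟨N2, hN2⟩ := Metric.tendsto_atTop.1 (hweak (TTG c₂)) (ε/2) (by linarith)
  obtain ⟨N3, hN3⟩ := Metric.tendsto_atTop.1 hlog (δ/2) (by linarith)
  obtain ⟨N4, hN4⟩ := Metric.tendsto_atTop.1 hpow (h/2) (by linarith)
  refine ⟨max (max N1 N2) (max (max N3 N4) 1), fun n hn => ?_⟩
  simp only [ge_iff_le, sup_le_iff] at hn
  obtain ⟨⟨⟨hn1, hn2⟩, ⟨hn3, hn4⟩, hn5⟩⟩ := And.intro hn trivial
  have hnne : (n : ℝ) ≠ 0 := Nat.cast_ne_zero.2 (by omega)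
  -- u n > 0
  have hupos : 0 < u n := by
    rcases lt_or_eq_of_le (hu n).1 with h' | h'
    · exact h'
    · exfalso
      have := hN4 n hn4
      rw [← h', zero_pow (by omega), Real.dist_eq] at this
      rw [abs_of_nonpos (by linarith)] at this
      linarith
  -- bounds on n log u n
  have hrange : c₁ ≤ (n : ℝ) * Real.log (u n) ∧ (n : ℝ) * Real.log (u n) ≤ c₂ := by
    have := hN3 n hn3
    rw [Real.dist_eq, abs_lt] at this
    constructor <;> [rw [hc₁]; rw [hc₂]] <;> linarith
  -- key pointwise identity : u n ^ k = exp (k/n * (n log u n))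
  have hkey : ∀ k : ℕ, u n ^ k = Real.exp (((k:ℝ)/n) * ((n:ℝ) * Real.log (u n))) := by
    intro k
    have : ((k:ℝ)/n) * ((n:ℝ) * Real.log (u n)) = (k:ℝ) * Real.log (u n) := by
      field_simp
    rw [this, ← Real.log_pow, Real.exp_log (pow_pos hupos k)]
  have hdivnn : ∀ k : ℕ, (0:ℝ) ≤ (k:ℝ)/n := fun k => by positivity
  -- termwise bounds
  have key1 : ∀ k : ℕ, TTG c₁ ((k:ℝ)/n) ≤ u n ^ k := by
    intro k
    rw [TTG_apply, max_eq_left (hdivnn k), hkey k]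
    exact le_trans (min_le_right _ _)
      (Real.exp_le_exp.2 (mul_le_mul_of_nonneg_left hrange.1 (hdivnn k)))
  have key2 : ∀ k : ℕ, u n ^ k ≤ TTG c₂ ((k:ℝ)/n) := by
    intro k
    rw [TTG_apply, max_eq_left (hdivnn k)]
    refine le_min (pow_le_one₀ (hu n).1 (hu n).2) ?_
    rw [hkey k]
    exact Real.exp_le_exp.2 (mul_le_mul_of_nonneg_left hrange.2 (hdivnn k))
  -- summability
  have hsummeas := summable_meas (ν n)
  have hsum1 : Summable (fun k : ℕ => TTG c₁ ((k:ℝ)/n) * ((ν n) {k}).toReal) :=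
    hsummeas.of_nonneg_of_le
      (fun k => mul_nonneg (TTG_mem _ _).1 ENNReal.toReal_nonneg)
      (fun k => mul_le_of_le_one_left ENNReal.toReal_nonneg (TTG_mem _ _).2)
  have hsum2 : Summable (fun k : ℕ => TTG c₂ ((k:ℝ)/n) * ((ν n) {k}).toReal) :=
    hsummeas.of_nonneg_of_le
      (fun k => mul_nonneg (TTG_mem _ _).1 ENNReal.toReal_nonneg)
      (fun k => mul_le_of_le_one_left ENNReal.toReal_nonneg (TTG_mem _ _).2)
  have hsumA : Summable (fun k : ℕ => u n ^ k * ((ν n) {k}).toReal) :=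
    hsummeas.of_nonneg_of_le
      (fun k => mul_nonneg (pow_nonneg (hu n).1 k) ENNReal.toReal_nonneg)
      (fun k => mul_le_of_le_one_left ENNReal.toReal_nonneg
        (pow_le_one₀ (hu n).1 (hu n).2))
  -- tsum bounds
  have tsum1 : (∑' k : ℕ, TTG c₁ ((k:ℝ)/n) * ((ν n) {k}).toReal)
      ≤ ∑' k : ℕ, u n ^ k * ((ν n) {k}).toReal :=
    Summable.tsum_le_tsum (fun k => mul_le_mul_of_nonneg_right (key1 k) ENNReal.toReal_nonneg)
      hsum1 hsumA
  have tsum2 : (∑' k : ℕ, u n ^ k * ((ν n) {k}).toReal)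
      ≤ ∑' k : ℕ, TTG c₂ ((k:ℝ)/n) * ((ν n) {k}).toReal :=
    Summable.tsum_le_tsum (fun k => mul_le_mul_of_nonneg_right (key2 k) ENNReal.toReal_nonneg)
      hsumA hsum2
  rw [← integral_TTG (ν n) n c₁] at tsum1
  rw [← integral_TTG (ν n) n c₂] at tsum2
  -- distance estimates
  have e1 := hN1 n hn1
  have e2 := hN2 n hn2
  have d1 := hδ c₁ hdist1
  have d2 := hδ c₂ hdist2
  rw [Real.dist_eq, abs_lt] at e1 e2 d1 d2 ⊢
  constructor <;> nlinarith [tsum1, tsum2]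
end

section
/- Let φ : [0,∞) → (0,1] be a continuous, strictly decreasing bijection from [0,∞) onto (0,1] with φ(0) = 1, differentiable at 0 with derivative φ'(0) = −1, and let φ⁻¹ : (0,1] → [0,∞) denote the inverse bijection. Let (g_n) be a sequence with 0 < g_n ≤ 1 and let c ≥ 0. Then φ(n·φ⁻¹(g_n)) converges to φ(c) as n → ∞ if and only if g_n^n converges to exp(−c). -/
open Filter Topology Set

private lemma tendsto_of_phi_tendsto_aux (φ : ℝ → ℝ) (hanti : StrictAntiOn φ (Ici 0))
    (a : ℕ → ℝ) (ha : ∀ n, 0 ≤ a n) (c : ℝ) (hc : 0 ≤ c)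
    (h : Tendsto (fun n => φ (a n)) atTop (𝓝 (φ c))) :
    Tendsto a atTop (𝓝 c) := by
  rw [tendsto_order]
  constructor
  · intro l hl
    rcases lt_or_ge l 0 with h0 | h0
    · exact Eventually.of_forall fun n => lt_of_lt_of_le h0 (ha n)
    · have hφ : φ c < φ l := hanti h0 hc hl
      filter_upwards [h.eventually_lt_const hφ] with n hn
      by_contra hcon
      push_neg at hcon
      exact absurd (hanti.antitoneOn (ha n) h0 hcon) (not_le.2 hn)
  · intro u hu
    have hφ : φ u < φ c := hanti hc (le_trans hc hu.le) hu
    filter_upwards [h.eventually_const_lt hφ] with n hn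
    by_contra hcon
    push_neg at hcon
    exact absurd (hanti.antitoneOn (le_trans hc hu.le) (ha n) hcon) (not_le.2 hn)

private lemma ratio_tendsto_aux (L : ℝ → ℝ)
    (hL : Tendsto (fun x => L x / x) (𝓝[Ici 0 \ {0}] 0) (𝓝 (-1)))
    (s : ℕ → ℝ) (hs0 : ∀ n, 0 ≤ s n) (hs : Tendsto s atTop (𝓝 0)) :
    Tendsto (fun n => if s n = 0 then (-1:ℝ) else L (s n) / s n) atTop (𝓝 (-1)) := by
  rw [Metric.tendsto_nhds]
  intro ε hε
  have hmem : {x : ℝ | dist (L x / x) (-1) < ε} ∈ 𝓝[Ici 0 \ {0}] 0 :=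
    hL (Metric.ball_mem_nhds _ hε)
  rw [Metric.mem_nhdsWithin_iff] at hmem
  obtain ⟨δ, hδ, hsub⟩ := hmem
  have hev : ∀ᶠ n in atTop, dist (s n) 0 < δ := (Metric.tendsto_nhds.mp hs) δ hδ
  filter_upwards [hev] with n hn
  by_cases h : s n = 0
  · simp [h, hε]
  · simp only [h, if_neg, if_false]
    exact hsub ⟨Metric.mem_ball.2 hn, ⟨hs0 n, h⟩⟩

/-- Pointwise one-dimensional form of Theorem 2.4: with `φ` the standard solution of the
Poincaré equation (continuous strictly decreasing bijection of `[0,∞)` onto `(0,1]` with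
`φ(0) = 1` and `φ'(0) = −1`) and `ψ` its inverse, for `0 < gₙ ≤ 1` and `c ≥ 0`,
`φ(n·ψ(gₙ)) → φ(c)` iff `gₙⁿ → exp(−c)`. -/
theorem random_max_tendsto_iff_pow_tendsto
    (φ : ℝ → ℝ)
    (hcont : ContinuousOn φ (Ici 0))
    (hanti : StrictAntiOn φ (Ici 0))
    (hbij : BijOn φ (Ici 0) (Ioc 0 1))
    (h0 : φ 0 = 1)
    (hderiv : HasDerivWithinAt φ (-1) (Ici 0) 0)
    (ψ : ℝ → ℝ)
    (hψφ : ∀ s ∈ Ici (0 : ℝ), ψ (φ s) = s)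
    (hφψ : ∀ u ∈ Ioc (0 : ℝ) 1, φ (ψ u) = u)
    (g : ℕ → ℝ) (hg : ∀ n, 0 < g n ∧ g n ≤ 1)
    (c : ℝ) (hc : 0 ≤ c) :
    Tendsto (fun n : ℕ => φ ((n : ℝ) * ψ (g n))) atTop (𝓝 (φ c)) ↔
      Tendsto (fun n : ℕ => g n ^ n) atTop (𝓝 (Real.exp (-c))) := by
  have hmem : ∀ n, g n ∈ Ioc (0:ℝ) 1 := fun n => ⟨(hg n).1, (hg n).2⟩
  set s : ℕ → ℝ := fun n => ψ (g n) with hsdef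
  have hs_mem : ∀ n, 0 ≤ s n := by
    intro n
    obtain ⟨t, ht, hφt⟩ := hbij.surjOn (hmem n)
    have : s n = t := by rw [hsdef]; simp only; rw [← hφt, hψφ t ht]
    rw [this]; exact ht
  have hφs : ∀ n, φ (s n) = g n := fun n => hφψ _ (hmem n)
  have hns_nonneg : ∀ n : ℕ, 0 ≤ (n : ℝ) * s n :=
    fun n => mul_nonneg (Nat.cast_nonneg n) (hs_mem n)
  -- log ∘ φ has derivative -1 at 0 within Ici 0
  set L : ℝ → ℝ := fun t => Real.log (φ t) with hLdef
  have hlog : HasDerivWithinAt L (-1) (Ici 0) 0 := by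
    have h1 : HasDerivAt Real.log 1 (φ 0) := by
      rw [h0]; simpa using Real.hasDerivAt_log one_ne_zero
    simpa [hLdef, Function.comp_def] using h1.comp_hasDerivWithinAt 0 hderiv
  have hL0 : L 0 = 0 := by simp [hLdef, h0]
  have hslope : Tendsto (fun x => L x / x) (𝓝[Ici 0 \ {0}] 0) (𝓝 (-1)) := by
    have := hasDerivWithinAt_iff_tendsto_slope.mp hlog
    refine this.congr fun x => ?_
    simp [slope_def_field, hL0]
  -- ratio sequence
  set r : ℕ → ℝ := fun n => if s n = 0 then (-1:ℝ) else L (s n) / s n with hrdef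
  have hkey : ∀ n : ℕ, (n : ℝ) * Real.log (g n) = ((n : ℝ) * s n) * r n := by
    intro n
    by_cases h : s n = 0
    · have : g n = 1 := by rw [← hφs n, h, h0]
      simp [hrdef, h, this]
    · simp only [hrdef, if_neg h]
      rw [← hφs n]
      field_simp [hLdef]
      ring
  constructor
  · -- forward
    intro H
    have hA : Tendsto (fun n : ℕ => (n : ℝ) * s n) atTop (𝓝 c) :=
      tendsto_of_phi_tendsto_aux φ hanti (fun n : ℕ => (n : ℝ) * s n) hns_nonneg c hc H
    have hs0 : Tendsto s atTop (𝓝 0) := by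
      have h1 : Tendsto (fun n : ℕ => ((n : ℝ) * s n) * (n : ℝ)⁻¹) atTop (𝓝 (c * 0)) :=
        hA.mul (tendsto_inv_atTop_zero.comp (tendsto_natCast_atTop_atTop (R := ℝ)))
      rw [mul_zero] at h1
      refine h1.congr' ?_
      filter_upwards [eventually_ge_atTop 1] with n hn
      have : (n : ℝ) ≠ 0 := Nat.cast_ne_zero.2 (by omega)
      field_simp
    have hr : Tendsto r atTop (𝓝 (-1)) := ratio_tendsto_aux L hslope s hs_mem hs0
    have hnl : Tendsto (fun n : ℕ => (n : ℝ) * Real.log (g n)) atTop (𝓝 (-c)) := by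
      have := hA.mul hr
      rw [show c * (-1) = -c by ring] at this
      exact this.congr fun n => (hkey n).symm
    have : Tendsto (fun n : ℕ => Real.exp ((n : ℝ) * Real.log (g n))) atTop
        (𝓝 (Real.exp (-c))) := (Real.continuous_exp.tendsto _).comp hnl
    refine this.congr fun n => ?_
    rw [Real.exp_nat_mul, Real.exp_log (hg n).1]
  · -- backward
    intro H
    have hnl : Tendsto (fun n : ℕ => (n : ℝ) * Real.log (g n)) atTop (𝓝 (-c)) := by
      have hlogcont : ContinuousAt Real.log (Real.exp (-c)) :=
        Real.continuousAt_log (Real.exp_ne_zero _)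
      have := hlogcont.tendsto.comp H
      rw [Real.log_exp] at this
      refine this.congr fun n => ?_
      simp [Real.log_pow]
    have hlg : Tendsto (fun n : ℕ => Real.log (g n)) atTop (𝓝 0) := by
      have h1 : Tendsto (fun n : ℕ => ((n : ℝ) * Real.log (g n)) * (n : ℝ)⁻¹) atTop
          (𝓝 ((-c) * 0)) := hnl.mul (tendsto_inv_atTop_zero.comp (tendsto_natCast_atTop_atTop (R := ℝ)))
      rw [mul_zero] at h1
      refine h1.congr' ?_
      filter_upwards [eventually_ge_atTop 1] with n hn
      have : (n : ℝ) ≠ 0 := Nat.cast_ne_zero.2 (by omega)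
      field_simp
    have hg1 : Tendsto g atTop (𝓝 1) := by
      have := (Real.continuous_exp.tendsto _).comp hlg
      rw [Real.exp_zero] at this
      refine this.congr fun n => ?_
      simp [Real.exp_log (hg n).1]
    have hs0 : Tendsto s atTop (𝓝 0) := by
      refine tendsto_of_phi_tendsto_aux φ hanti s hs_mem 0 le_rfl ?_
      rw [h0]
      exact hg1.congr fun n => (hφs n).symm
    have hr : Tendsto r atTop (𝓝 (-1)) := ratio_tendsto_aux L hslope s hs_mem hs0
    have hrne : ∀ᶠ n in atTop, r n ≠ 0 := by
      filter_upwards [hr.eventually_lt_const (show (-1:ℝ) < -1/2 by norm_num)] with n hn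
      exact ne_of_lt (lt_trans hn (by norm_num))
    have hns : Tendsto (fun n : ℕ => (n : ℝ) * s n) atTop (𝓝 c) := by
      have h1 : Tendsto (fun n : ℕ => ((n : ℝ) * Real.log (g n)) / r n) atTop
          (𝓝 ((-c) / (-1))) := hnl.div hr (by norm_num)
      rw [show (-c) / (-1 : ℝ) = c by ring] at h1
      refine h1.congr' ?_
      filter_upwards [hrne] with n hn
      rw [hkey n, mul_div_assoc, div_self hn, mul_one]
    have hcw : ContinuousWithinAt φ (Ici 0) c := hcont c hc
    exact hcw.tendsto.comp
      (tendsto_nhdsWithin_of_tendsto_nhds_of_eventually_within _ hns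
        (Eventually.of_forall hns_nonneg))
end

section
/- Let H : ℝ → ℝ be a distribution function (monotone nondecreasing, right-continuous, tending to 0 at −∞ and to 1 at +∞). Then there exists a Borel measure μ on ℝ (with values in [0,∞]) such that for every x ∈ ℝ: μ((x,∞)) = ∞ if H(x) = 0, and μ((x,∞)) is finite with H(x) = exp(−μ((x,∞))) if H(x) > 0. -/
open MeasureTheory Filter Topology Set

/-- `μ(Ioi x)` for a Stieltjes measure. -/
lemma stieltjes_measure_Ioi (f : StieltjesFunction ℝ) {u : ℝ}
    (hf : Tendsto f atTop (𝓝 u)) (x : ℝ) :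
    f.measure (Ioi x) = ENNReal.ofReal (u - f x) := by
  have hIoi : Ioi x = ⋃ n : ℕ, Ioc x (x + n) := by
    ext y
    simp only [mem_Ioi, mem_iUnion, mem_Ioc]
    constructor
    · intro hy
      obtain ⟨n, hn⟩ := exists_nat_ge (y - x)
      exact ⟨n, hy, by linarith⟩
    · rintro ⟨n, h1, _⟩; exact h1
  have hsets : Monotone fun n : ℕ => Ioc x (x + (n : ℝ)) := by
    intro m n hmn
    exact Ioc_subset_Ioc_right (by exact add_le_add_right (Nat.cast_le.2 hmn) x)
  have hmono : Monotone fun n : ℕ => ENNReal.ofReal (f (x + n) - f x) := by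
    intro m n hmn
    exact ENNReal.ofReal_le_ofReal
      (sub_le_sub_right (f.mono (by exact add_le_add_right (Nat.cast_le.2 hmn) x)) _)
  have harg : Tendsto (fun n : ℕ => x + (n : ℝ)) atTop atTop :=
    tendsto_atTop_add_const_left _ x tendsto_natCast_atTop_atTop
  have h2 : Tendsto (fun n : ℕ => ENNReal.ofReal (f (x + n) - f x)) atTop
      (𝓝 (ENNReal.ofReal (u - f x))) :=
    ENNReal.tendsto_ofReal ((hf.comp harg).sub_const _)
  rw [hIoi, Directed.measure_iUnion hsets.directed_le]
  simp_rw [f.measure_Ioc]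
  exact tendsto_nhds_unique (tendsto_atTop_iSup hmono) h2

/-- Exponent-measure representation in dimension one: every distribution function `H`
admits a Borel measure `μ` with `μ((x,∞)) = ∞` where `H(x) = 0`, and
`H(x) = exp(−μ((x,∞)))` (with `μ((x,∞)) < ∞`) where `H(x) > 0`. -/
theorem exists_exponent_measure
    (H : ℝ → ℝ) (hH : IsDF H) :
    ∃ μ : Measure ℝ, ∀ x : ℝ,
      (H x = 0 → μ (Ioi x) = ⊤) ∧
      (0 < H x → μ (Ioi x) ≠ ⊤ ∧ H x = Real.exp (-(μ (Ioi x)).toReal)) := by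
  obtain ⟨hmono, hrc, hbot, htop⟩ := hH
  -- basic bounds
  have hnonneg : ∀ x, 0 ≤ H x := by
    intro x
    refine le_of_tendsto hbot ?_
    filter_upwards [eventually_le_atBot x] with y hy using hmono hy
  have hle1 : ∀ x, H x ≤ 1 := by
    intro x
    refine ge_of_tendsto htop ?_
    filter_upwards [eventually_ge_atTop x] with y hy using hmono hy
  -- common finisher
  have finisher : ∀ (μ : Measure ℝ) (x : ℝ), 0 < H x →
      μ (Ioi x) = ENNReal.ofReal (-(Real.log (H x))) →
      μ (Ioi x) ≠ ⊤ ∧ H x = Real.exp (-(μ (Ioi x)).toReal) := by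
    intro μ x hx hval
    refine ⟨by simp [hval], ?_⟩
    rw [hval, ENNReal.toReal_ofReal (neg_nonneg.2 (Real.log_nonpos (hnonneg x) (hle1 x))),
      neg_neg, Real.exp_log hx]
  by_cases hz : ∃ x, H x = 0
  · -- the zero set is nonempty; let a be its supremum
    obtain ⟨x₀, hx₀⟩ := hz
    set Z : Set ℝ := {x | H x = 0} with hZ
    have hZne : Z.Nonempty := ⟨x₀, hx₀⟩
    obtain ⟨b, hb⟩ : ∃ b, 0 < H b := by
      have := htop.eventually (eventually_gt_nhds (by norm_num : (0:ℝ) < 1))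
      exact this.exists
    have hZbdd : BddAbove Z := by
      refine ⟨b, fun z hz => ?_⟩
      by_contra h
      push_neg at h
      have : H b ≤ H z := hmono h.le
      rw [hz] at this
      linarith
    set a : ℝ := sSup Z with ha
    have hzero : ∀ x, x < a → H x = 0 := by
      intro x hx
      obtain ⟨z, hzZ, hxz⟩ := exists_lt_of_lt_csSup hZne hx
      have h1 : H x ≤ H z := hmono hxz.le
      rw [hzZ] at h1
      exact le_antisymm h1 (hnonneg x)
    have hpos : ∀ x, a < x → 0 < H x := by
      intro x hx
      rcases (hnonneg x).lt_or_eq with h | h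
      · exact h
      · exact absurd (le_csSup hZbdd h.symm) (not_le.2 hx)
    -- the transformed Stieltjes function g(y) = log H (a + exp y)
    have hargpos : ∀ y : ℝ, a < a + Real.exp y := fun y => by
      have := Real.exp_pos y; linarith
    set g : ℝ → ℝ := fun y => Real.log (H (a + Real.exp y)) with hg
    have hgmono : Monotone g := by
      intro y y' hy
      exact Real.log_le_log (hpos _ (hargpos y))
        (hmono (by have := Real.exp_le_exp.2 hy; linarith))
    have hgrc : ∀ y, ContinuousWithinAt g (Ici y) y := by
      intro y
      have hφ : ContinuousWithinAt (fun t => a + Real.exp t) (Ici y) y :=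
        (continuous_const.add Real.continuous_exp).continuousWithinAt
      have hmaps : MapsTo (fun t => a + Real.exp t) (Ici y) (Ici (a + Real.exp y)) := by
        intro t ht
        simp only [mem_Ici] at ht ⊢
        have := Real.exp_le_exp.2 ht
        linarith
      have hHc : ContinuousWithinAt (H ∘ fun t => a + Real.exp t) (Ici y) y :=
        ContinuousWithinAt.comp (hrc (a + Real.exp y)) hφ hmaps
      have h5 : ContinuousWithinAt (Real.log ∘ (H ∘ fun t => a + Real.exp t)) (Ici y) y :=
        ContinuousAt.comp_continuousWithinAt (f := H ∘ fun t => a + Real.exp t)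
          (g := Real.log) (x := y)
          (Real.continuousAt_log (ne_of_gt (hpos _ (hargpos y)))) hHc
      simpa [Function.comp_def, hg] using h5
    set f : StieltjesFunction ℝ := ⟨g, hgmono, hgrc⟩ with hf
    have hgtop : Tendsto g atTop (𝓝 0) := by
      have h1 : Tendsto (fun y => a + Real.exp y) atTop atTop :=
        tendsto_atTop_add_const_left _ a Real.tendsto_exp_atTop
      have h2 : Tendsto (fun y => H (a + Real.exp y)) atTop (𝓝 1) := htop.comp h1
      have := (Real.continuousAt_log one_ne_zero).tendsto.comp h2
      simpa [Function.comp_def] using this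
    -- the measure
    set φ : ℝ → ℝ := fun y => a + Real.exp y with hφdef
    have hφmeas : Measurable φ := measurable_const.add Real.measurable_exp
    set μ : Measure ℝ := (f.measure.map φ) + (⊤ : ENNReal) • volume.restrict (Iio a) with hμ
    have hres : ∀ x, a ≤ x → ((⊤ : ENNReal) • volume.restrict (Iio a)) (Ioi x) = 0 := by
      intro x hx
      rw [Measure.smul_apply, Measure.restrict_apply measurableSet_Ioi]
      have : Ioi x ∩ Iio a = ∅ := by
        ext y
        simp only [mem_inter_iff, mem_Ioi, mem_Iio, mem_empty_iff_false, iff_false, not_and,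
          not_lt]
        intro hy
        linarith
      simp [this]
    have hmap : ∀ x, a < x → (f.measure.map φ) (Ioi x)
        = ENNReal.ofReal (-(Real.log (H x))) := by
      intro x hx
      rw [Measure.map_apply hφmeas measurableSet_Ioi]
      have hpre : φ ⁻¹' (Ioi x) = Ioi (Real.log (x - a)) := by
        ext y
        simp only [mem_preimage, mem_Ioi, hφdef]
        rw [Real.log_lt_iff_lt_exp (sub_pos.2 hx)]
        constructor <;> intro h <;> linarith
      rw [hpre, stieltjes_measure_Ioi f hgtop]
      have : g (Real.log (x - a)) = Real.log (H x) := by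
        simp only [hg]
        rw [Real.exp_log (sub_pos.2 hx)]
        ring_nf
      rw [show f (Real.log (x - a)) = g (Real.log (x - a)) from rfl, this, zero_sub]
    refine ⟨μ, fun x => ?_⟩
    rcases lt_trichotomy x a with hx | hx | hx
    · -- x < a : H x = 0, measure infinite
      have hHx := hzero x hx
      constructor
      · intro _
        have h1 : ((⊤ : ENNReal) • volume.restrict (Iio a)) (Ioi x) = ⊤ := by
          rw [Measure.smul_apply, Measure.restrict_apply measurableSet_Ioi]
          have hsub : Ioo x a ⊆ Ioi x ∩ Iio a := fun y hy => ⟨hy.1, hy.2⟩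
          have hv : (0 : ENNReal) < volume (Ioi x ∩ Iio a) := by
            refine lt_of_lt_of_le ?_ (measure_mono hsub)
            rw [Real.volume_Ioo]
            simp [ENNReal.ofReal_pos, sub_pos.2 hx]
          simp only [smul_eq_mul]
          exact ENNReal.top_mul (ne_of_gt hv)
        rw [hμ]
        rw [Measure.add_apply]
        rw [h1, add_top]
      · intro hcontra
        rw [hHx] at hcontra
        exact absurd hcontra (lt_irrefl 0)
    · -- x = a
      subst hx
      constructor
      · intro hHa
        -- f.measure univ = ⊤ since g → -∞ at -∞
        have hgbot : Tendsto g atBot atBot := by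
          have h1 : Tendsto (fun y => a + Real.exp y) atBot (𝓝[>] a) := by
            refine tendsto_nhdsWithin_of_tendsto_nhds_of_eventually_within _ ?_ ?_
            · simpa using tendsto_const_nhds.add Real.tendsto_exp_atBot
            · filter_upwards with y
              simp only [mem_Ioi]
              have := Real.exp_pos y
              linarith
          have h2 : Tendsto (fun y => H (a + Real.exp y)) atBot (𝓝 0) := by
            have := (hrc a).tendsto
            have h3 : Tendsto H (𝓝[>] a) (𝓝 (H a)) :=
              this.mono_left (nhdsWithin_mono a Ioi_subset_Ici_self)
            rw [hHa] at h3
            exact h3.comp h1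
          have h4 : Tendsto (fun y => H (a + Real.exp y)) atBot (𝓝[>] 0) := by
            refine tendsto_nhdsWithin_of_tendsto_nhds_of_eventually_within _ h2 ?_
            filter_upwards with y using hpos _ (hargpos y)
          exact Real.tendsto_log_nhdsGT_zero.comp h4
        have huniv : f.measure univ = ⊤ := by
          refine ENNReal.eq_top_of_forall_nnreal_le fun r => ?_
          obtain ⟨y, hy⟩ : ∃ y, g y ≤ g 0 - r := by
            have := hgbot.eventually (eventually_le_atBot (g 0 - (r : ℝ)))
            exact this.exists
          calc (r : ENNReal) = ENNReal.ofReal r := (ENNReal.ofReal_coe_nnreal).symm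
            _ ≤ ENNReal.ofReal (g 0 - g y) := ENNReal.ofReal_le_ofReal (by linarith)
            _ = f.measure (Ioc y 0) := (f.measure_Ioc y 0).symm
            _ ≤ f.measure univ := measure_mono (subset_univ _)
        have hpreuniv : φ ⁻¹' (Ioi a) = univ := by
          ext y
          simp only [mem_preimage, mem_Ioi, mem_univ, iff_true, hφdef]
          exact hargpos y
        rw [hμ, Measure.add_apply, Measure.map_apply hφmeas measurableSet_Ioi, hpreuniv,
          huniv, top_add]
      · intro hHa
        have hgbot' : Tendsto g atBot (𝓝 (Real.log (H a))) := by
          have h1 : Tendsto (fun y => a + Real.exp y) atBot (𝓝[≥] a) := by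
            refine tendsto_nhdsWithin_of_tendsto_nhds_of_eventually_within _ ?_ ?_
            · simpa using tendsto_const_nhds.add Real.tendsto_exp_atBot
            · filter_upwards with y
              simp only [mem_Ici]
              have := Real.exp_pos y
              linarith
          have h2 : Tendsto (fun y => H (a + Real.exp y)) atBot (𝓝 (H a)) :=
            (hrc a).tendsto.comp h1
          exact (Real.continuousAt_log (ne_of_gt hHa)).tendsto.comp h2
        have huniv : f.measure univ = ENNReal.ofReal (0 - Real.log (H a)) :=
          f.measure_univ hgbot' hgtop
        have hpreuniv : φ ⁻¹' (Ioi a) = univ := by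
          ext y
          simp only [mem_preimage, mem_Ioi, mem_univ, iff_true, hφdef]
          exact hargpos y
        have hval : μ (Ioi a) = ENNReal.ofReal (-(Real.log (H a))) := by
          rw [hμ, Measure.add_apply, Measure.map_apply hφmeas measurableSet_Ioi, hpreuniv,
            huniv, hres a le_rfl, add_zero]
          ring_nf
        exact finisher μ a hHa hval
    · -- x > a : H x > 0
      have hHx := hpos x hx
      constructor
      · intro h; rw [h] at hHx; exact absurd hHx (lt_irrefl 0)
      · intro _
        have hval : μ (Ioi x) = ENNReal.ofReal (-(Real.log (H x))) := by
          rw [hμ, Measure.add_apply, hmap x hx, hres x hx.le, add_zero]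
        exact finisher μ x hHx hval
  · -- H is everywhere positive: plain Stieltjes function log ∘ H
    push_neg at hz
    have hpos : ∀ x, 0 < H x := fun x => (hnonneg x).lt_of_ne (Ne.symm (hz x))
    have hgmono : Monotone fun x => Real.log (H x) := fun x y hxy =>
      Real.log_le_log (hpos x) (hmono hxy)
    have hgrc : ∀ x, ContinuousWithinAt (fun x => Real.log (H x)) (Ici x) x := fun x =>
      (Real.continuousAt_log (ne_of_gt (hpos x))).comp_continuousWithinAt (hrc x)
    set f : StieltjesFunction ℝ := ⟨fun x => Real.log (H x), hgmono, hgrc⟩ with hf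
    have hgtop : Tendsto (fun x => Real.log (H x)) atTop (𝓝 0) := by
      have := (Real.continuousAt_log one_ne_zero).tendsto.comp htop
      simpa [Function.comp_def] using this
    refine ⟨f.measure, fun x => ?_⟩
    constructor
    · intro h; exact absurd h (hz x)
    · intro hx
      have hval : f.measure (Ioi x) = ENNReal.ofReal (-(Real.log (H x))) := by
        rw [stieltjes_measure_Ioi f hgtop]
        norm_num
        rfl
      exact finisher f.measure x hx hval
end

section
/- Let φ : [0,∞) → (0,1] be a continuous, strictly decreasing bijection from [0,∞) onto (0,1] with φ(0) = 1, differentiable at 0 with derivative φ'(0) = −1, and inverse φ⁻¹. Let G and H be distribution functions on ℝ with G(y) > 0 for all y, let a_n > 0 and b_n ∈ ℝ be sequences of constants, and let x ∈ ℝ be a point with H(x) > 0. Then G(a_n·x + b_n)^n → H(x) as n → ∞ if and only if φ(n·φ⁻¹(G(a_n·x + b_n))) → φ(−log H(x)) as n → ∞. -/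
open Filter Topology Set

/-- Inverse continuity along sequences for a strictly decreasing map on `Ici 0`. -/
lemma tendsto_of_phi_tendsto (φ : ℝ → ℝ) (hanti : StrictAntiOn φ (Ici 0))
    {t : ℝ} (ht : 0 ≤ t) {u : ℕ → ℝ} (hu : ∀ n, 0 ≤ u n)
    (h : Tendsto (fun n => φ (u n)) atTop (𝓝 (φ t))) :
    Tendsto u atTop (𝓝 t) := by
  rw [tendsto_order]
  constructor
  · intro c hc
    rcases lt_or_ge c 0 with hc0 | hc0
    · exact Eventually.of_forall fun n => lt_of_lt_of_le hc0 (hu n)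
    · have h1 : φ t < φ c := hanti hc0 ht hc
      filter_upwards [h.eventually (eventually_lt_nhds h1)] with n hn
      exact (hanti.lt_iff_gt (hu n) hc0).mp hn
  · intro c hc
    have hc0 : (0:ℝ) ≤ c := le_trans ht hc.le
    have h1 : φ c < φ t := hanti ht hc0 hc
    filter_upwards [h.eventually (eventually_gt_nhds h1)] with n hn
    exact (hanti.lt_iff_gt hc0 (hu n)).mp hn

/-- The slope-type quotient of `φ` tends to `-1` at `0` within `Ici 0`. -/
lemma tendsto_rquot (φ : ℝ → ℝ) (h0 : φ 0 = 1)
    (hderiv : HasDerivWithinAt φ (-1) (Ici 0) 0) :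
    Tendsto (fun s => if s = 0 then (-1:ℝ) else (φ s - 1) / s) (𝓝[Ici 0] 0)
      (𝓝 (-1)) := by
  have hs := hasDerivWithinAt_iff_tendsto_slope.mp hderiv
  have h1 : Tendsto (fun s => if s = 0 then (-1:ℝ) else (φ s - 1) / s)
      (𝓝[Ici 0 \ {0}] 0) (𝓝 (-1)) := by
    refine hs.congr' ?_
    filter_upwards [self_mem_nhdsWithin] with s hsmem
    have hne : s ≠ 0 := hsmem.2
    simp [slope, hne, h0, div_eq_inv_mul]
  have h2 : Tendsto (fun s => if s = 0 then (-1:ℝ) else (φ s - 1) / s)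
      (pure (0:ℝ)) (𝓝 (-1)) := by
    have := tendsto_pure_nhds (fun s => if s = 0 then (-1:ℝ) else (φ s - 1) / s) 0
    simpa using this
  have hEq : 𝓝[Ici (0:ℝ)] 0 = 𝓝[Ici 0 \ {0}] 0 ⊔ pure 0 := by
    rw [← nhdsWithin_singleton, ← nhdsWithin_union, diff_union_self,
      union_eq_self_of_subset_right (by simp)]
  rw [hEq]
  exact tendsto_sup.mpr ⟨h1, h2⟩

/-- The slope-type quotient of `log` tends to `1` at `1`. -/
lemma tendsto_qquot :
    Tendsto (fun v => if v = 1 then (1:ℝ) else Real.log v / (v - 1)) (𝓝 1)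
      (𝓝 1) := by
  have hd : HasDerivAt Real.log 1 1 := by
    simpa using Real.hasDerivAt_log one_ne_zero
  have hs := hasDerivAt_iff_tendsto_slope.mp hd
  have h1 : Tendsto (fun v => if v = 1 then (1:ℝ) else Real.log v / (v - 1))
      (𝓝[≠] (1:ℝ)) (𝓝 1) := by
    refine hs.congr' ?_
    filter_upwards [self_mem_nhdsWithin] with v hv
    have hne : v ≠ 1 := hv
    simp [slope, hne, Real.log_one, div_eq_inv_mul]
  have h2 : Tendsto (fun v => if v = 1 then (1:ℝ) else Real.log v / (v - 1))
      (pure (1:ℝ)) (𝓝 1) := by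
    have := tendsto_pure_nhds (fun v => if v = 1 then (1:ℝ) else Real.log v / (v - 1)) 1
    simpa using this
  exact (tendsto_sup.mpr ⟨h1, h2⟩).mono_left
    (le_of_eq (nhdsNE_sup_pure (1:ℝ)).symm)

/-- Pointwise one-dimensional Theorem 3.4: `G(aₙx + bₙ)ⁿ → H(x)` if and only if
`φ(n·φ⁻¹(G(aₙx + bₙ))) → φ(−log H(x))`, where `φ` is the standard solution to the
Poincaré equation and `ψ = φ⁻¹`. -/
theorem mem_domain_nMaxAttraction_iff
    (φ : ℝ → ℝ)
    (hcont : ContinuousOn φ (Ici 0))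
    (hanti : StrictAntiOn φ (Ici 0))
    (hbij : BijOn φ (Ici 0) (Ioc 0 1))
    (h0 : φ 0 = 1)
    (hderiv : HasDerivWithinAt φ (-1) (Ici 0) 0)
    (ψ : ℝ → ℝ)
    (hψφ : ∀ s ∈ Ici (0 : ℝ), ψ (φ s) = s)
    (hφψ : ∀ u ∈ Ioc (0 : ℝ) 1, φ (ψ u) = u)
    (G : ℝ → ℝ) (hG : IsDF G) (hGpos : ∀ y, 0 < G y)
    (H : ℝ → ℝ) (hH : IsDF H)
    (a : ℕ → ℝ) (ha : ∀ n, 0 < a n) (b : ℕ → ℝ)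
    (x : ℝ) (hx : 0 < H x) :
    Tendsto (fun n : ℕ => G (a n * x + b n) ^ n) atTop (𝓝 (H x)) ↔
      Tendsto (fun n : ℕ => φ ((n : ℝ) * ψ (G (a n * x + b n)))) atTop
        (𝓝 (φ (-Real.log (H x)))) := by
  set u : ℕ → ℝ := fun n => G (a n * x + b n) with hu_def
  set s : ℕ → ℝ := fun n => ψ (u n) with hs_def
  set r : ℝ → ℝ := fun s => if s = 0 then (-1:ℝ) else (φ s - 1) / s with hr_def
  set q : ℝ → ℝ := fun v => if v = 1 then (1:ℝ) else Real.log v / (v - 1) with hq_def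
  set L : ℝ := Real.log (H x) with hL_def
  set t : ℝ := -L with ht_def
  have hu_pos : ∀ n, 0 < u n := fun n => hGpos _
  have hu_le : ∀ n, u n ≤ 1 := fun n => hG.1.ge_of_tendsto hG.2.2.2 _
  have hu_mem : ∀ n, u n ∈ Ioc (0:ℝ) 1 := fun n => ⟨hu_pos n, hu_le n⟩
  have hφs : ∀ n, φ (s n) = u n := fun n => hφψ _ (hu_mem n)
  have hs_mem : ∀ n, 0 ≤ s n := by
    intro n
    obtain ⟨s', hs', hφ'⟩ := hbij.surjOn (hu_mem n)
    have : s n = s' := by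
      rw [hs_def]; simp only; rw [← hφ', hψφ s' hs']
    rw [this]; exact hs'
  have hHle : H x ≤ 1 := hH.1.ge_of_tendsto hH.2.2.2 _
  have htnn : 0 ≤ t := by
    rw [ht_def, hL_def]
    simpa using Real.log_nonpos hx.le hHle
  have hlog_eq : ∀ n, Real.log (u n) = (u n - 1) * q (u n) := by
    intro n
    by_cases h1 : u n = 1
    · simp [hq_def, h1]
    · rw [hq_def]; simp only [if_neg h1]
      rw [mul_comm, div_mul_cancel₀ _ (sub_ne_zero.mpr h1)]
  have hφ_eq : ∀ n, φ (s n) - 1 = s n * r (s n) := by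
    intro n
    by_cases h1 : s n = 0
    · simp [hr_def, h1, h0]
    · rw [hr_def]; simp only [if_neg h1]
      rw [mul_comm, div_mul_cancel₀ _ h1]
  -- key: equivalence between ordinary convergence and the transformed one
  constructor
  · intro hP1
    -- n * log u n → L
    have hP2 : Tendsto (fun n : ℕ => (n:ℝ) * Real.log (u n)) atTop (𝓝 L) := by
      have hcomp : Tendsto (fun n : ℕ => Real.log (u n ^ n)) atTop (𝓝 L) :=
        ((Real.continuousAt_log hx.ne').tendsto).comp hP1
      refine hcomp.congr fun n => ?_
      rw [Real.log_pow]
    -- u n → 1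
    have hu1 : Tendsto u atTop (𝓝 1) := by
      have hlog0 : Tendsto (fun n : ℕ => Real.log (u n)) atTop (𝓝 0) := by
        have := hP2.mul tendsto_one_div_atTop_nhds_zero_nat
        rw [mul_zero] at this
        refine this.congr' ?_
        filter_upwards [eventually_gt_atTop 0] with n hn
        have hne : (n:ℝ) ≠ 0 := Nat.cast_ne_zero.mpr hn.ne'
        field_simp
      have := (Real.continuous_exp.tendsto 0).comp hlog0
      simp only [Real.exp_zero] at this
      refine this.congr fun n => ?_
      exact Real.exp_log (hu_pos n)
    -- q (u n) → 1
    have hq1 : Tendsto (fun n => q (u n)) atTop (𝓝 1) := tendsto_qquot.comp hu1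
    have hqne : ∀ᶠ n in atTop, q (u n) ≠ 0 :=
      hq1.eventually_ne one_ne_zero
    -- n * (u n - 1) → L
    have hP3 : Tendsto (fun n : ℕ => (n:ℝ) * (u n - 1)) atTop (𝓝 L) := by
      have := hP2.div hq1 one_ne_zero
      rw [div_one] at this
      refine this.congr' ?_
      filter_upwards [hqne] with n hn
      simp only [Pi.div_apply]
      rw [hlog_eq n]
      field_simp
    -- s n → 0
    have hs0 : Tendsto s atTop (𝓝 0) := by
      refine tendsto_of_phi_tendsto φ hanti le_rfl hs_mem ?_
      rw [h0]
      exact hu1.congr fun n => (hφs n).symm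
    -- r (s n) → -1
    have hr1 : Tendsto (fun n => r (s n)) atTop (𝓝 (-1)) := by
      refine (tendsto_rquot φ h0 hderiv).comp ?_
      exact tendsto_nhdsWithin_of_tendsto_nhds_of_eventually_within _ hs0
        (Eventually.of_forall hs_mem)
    have hrne : ∀ᶠ n in atTop, r (s n) ≠ 0 :=
      hr1.eventually_ne (by norm_num)
    -- n * s n → t
    have hP4 : Tendsto (fun n : ℕ => (n:ℝ) * s n) atTop (𝓝 t) := by
      have h5 := hP3.div hr1 (by norm_num : (-1:ℝ) ≠ 0)
      have heq : L / (-1) = t := by rw [ht_def]; ring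
      rw [heq] at h5
      refine h5.congr' ?_
      filter_upwards [hrne] with n hn
      simp only [Pi.div_apply]
      have h6 : u n - 1 = s n * r (s n) := by rw [← hφs n]; exact hφ_eq n
      rw [h6]
      field_simp
    -- conclude with continuity of φ
    have hmem : Tendsto (fun n : ℕ => (n:ℝ) * s n) atTop (𝓝[Ici 0] t) :=
      tendsto_nhdsWithin_of_tendsto_nhds_of_eventually_within _ hP4
        (Eventually.of_forall fun n => mul_nonneg (Nat.cast_nonneg n) (hs_mem n))
    exact ((hcont t (mem_Ici.mpr htnn)).tendsto).comp hmem
  · intro hP5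
    -- n * s n → t
    have hP4 : Tendsto (fun n : ℕ => (n:ℝ) * s n) atTop (𝓝 t) :=
      tendsto_of_phi_tendsto φ hanti htnn
        (fun n => mul_nonneg (Nat.cast_nonneg n) (hs_mem n)) hP5
    -- s n → 0
    have hs0 : Tendsto s atTop (𝓝 0) := by
      have := hP4.mul tendsto_one_div_atTop_nhds_zero_nat
      rw [mul_zero] at this
      refine this.congr' ?_
      filter_upwards [eventually_gt_atTop 0] with n hn
      have hne : (n:ℝ) ≠ 0 := Nat.cast_ne_zero.mpr hn.ne'
      field_simp
    -- u n → 1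
    have hu1 : Tendsto u atTop (𝓝 1) := by
      have hmem : Tendsto s atTop (𝓝[Ici 0] 0) :=
        tendsto_nhdsWithin_of_tendsto_nhds_of_eventually_within _ hs0
          (Eventually.of_forall hs_mem)
      have := ((hcont 0 (mem_Ici.mpr le_rfl)).tendsto).comp hmem
      rw [h0] at this
      exact this.congr fun n => hφs n
    -- r (s n) → -1
    have hr1 : Tendsto (fun n => r (s n)) atTop (𝓝 (-1)) := by
      refine (tendsto_rquot φ h0 hderiv).comp ?_
      exact tendsto_nhdsWithin_of_tendsto_nhds_of_eventually_within _ hs0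
        (Eventually.of_forall hs_mem)
    -- n * (u n - 1) → L
    have hP3 : Tendsto (fun n : ℕ => (n:ℝ) * (u n - 1)) atTop (𝓝 L) := by
      have := hP4.mul hr1
      have heq : t * (-1) = L := by rw [ht_def]; ring
      rw [heq] at this
      refine this.congr fun n => ?_
      rw [← hφs n, hφ_eq n]
      ring
    -- q (u n) → 1
    have hq1 : Tendsto (fun n => q (u n)) atTop (𝓝 1) := tendsto_qquot.comp hu1
    -- n * log u n → L
    have hP2 : Tendsto (fun n : ℕ => (n:ℝ) * Real.log (u n)) atTop (𝓝 L) := by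
      have := hP3.mul hq1
      rw [mul_one] at this
      refine this.congr fun n => ?_
      rw [hlog_eq n]
      ring
    -- conclude
    have := (Real.continuous_exp.tendsto L).comp hP2
    rw [hL_def, Real.exp_log hx] at this
    refine this.congr fun n => ?_
    simp only [Function.comp_apply]
    rw [Real.exp_nat_mul, Real.exp_log (hu_pos n)]
end

section
/- Let F : ℝ → ℝ be a distribution function (monotone nondecreasing, right-continuous, tending to 0 at −∞ and to 1 at +∞). For each n ≥ 1 define G_n(x) = max(0, 1 + log(F(x))/n), with the convention G_n(x) = 0 when F(x) = 0. Then each G_n is a distribution function, and for every x ∈ ℝ, exp(−n·(1 − G_n(x))) = max(exp(−n), F(x)); in particular exp(−n·(1 − G_n(x))) converges to F(x) as n → ∞. -/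
open Filter Topology Set

/-- One-dimensional Balkema–Resnick representation (sufficiency half of Theorem 1.1):
for a distribution function `F` and `Gₙ(x) = max(0, 1 + log F(x)/n)` (with `Gₙ(x) = 0`
when `F(x) = 0`), each `Gₙ` is a distribution function,
`exp(−n(1 − Gₙ(x))) = max(exp(−n), F(x))`, and `exp(−n(1 − Gₙ(x))) → F(x)`. -/
theorem every_df_is_max_infinitely_divisible
    (F : ℝ → ℝ) (hF : IsDF F)
    (G : ℕ → ℝ → ℝ)
    (hG : ∀ n x, G n x = if F x = 0 then 0 else max 0 (1 + Real.log (F x) / n)) :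
    (∀ n : ℕ, 1 ≤ n → IsDF (G n)) ∧
      (∀ n : ℕ, 1 ≤ n → ∀ x, Real.exp (-((n : ℝ) * (1 - G n x)))
        = max (Real.exp (-(n : ℝ))) (F x)) ∧
      ∀ x, Tendsto (fun n : ℕ => Real.exp (-((n : ℝ) * (1 - G n x)))) atTop (𝓝 (F x)) := by
  obtain ⟨hmono, hrc, hbot, htop⟩ := hF
  have hF0 : ∀ x, 0 ≤ F x := by
    intro x
    refine le_of_tendsto hbot ?_
    filter_upwards [eventually_le_atBot x] with y hy using hmono hy
  have hF1 : ∀ x, F x ≤ 1 := by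
    intro x
    refine ge_of_tendsto htop ?_
    filter_upwards [eventually_ge_atTop x] with y hy using hmono hy
  -- the key reformulation of `G n`
  have hkey : ∀ n : ℕ, 1 ≤ n → ∀ x,
      G n x = 1 + Real.log (max (Real.exp (-(n : ℝ))) (F x)) / n := by
    intro n hn x
    have hn0 : (0 : ℝ) < n := by exact_mod_cast hn
    rw [hG]
    by_cases h0 : F x = 0
    · rw [if_pos h0, h0, max_eq_left (Real.exp_pos _).le, Real.log_exp]
      field_simp
      norm_num
    · have hFpos : 0 < F x := lt_of_le_of_ne (hF0 x) (Ne.symm h0)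
      rw [if_neg h0]
      rcases le_or_gt (Real.exp (-(n : ℝ))) (F x) with hle | hlt
      · rw [max_eq_right hle, max_eq_right]
        have h1 : -(n : ℝ) ≤ Real.log (F x) := by
          rw [← Real.log_exp (-(n : ℝ))]
          exact Real.log_le_log (Real.exp_pos _) hle
        have h2 : (-1 : ℝ) ≤ Real.log (F x) / n := (le_div_iff₀ hn0).2 (by linarith)
        linarith
      · have h1 : Real.log (F x) ≤ -(n : ℝ) := by
          rw [← Real.log_exp (-(n : ℝ))]
          exact (Real.log_le_log hFpos hlt.le)
        have h2 : Real.log (F x) / n ≤ -1 := (div_le_iff₀ hn0).2 (by linarith)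
        rw [max_eq_left hlt.le, Real.log_exp, max_eq_left (by linarith)]
        field_simp
        norm_num
  -- the exponential identity
  have hid : ∀ n : ℕ, 1 ≤ n → ∀ x, Real.exp (-((n : ℝ) * (1 - G n x)))
      = max (Real.exp (-(n : ℝ))) (F x) := by
    intro n hn x
    have hn0 : (0 : ℝ) < n := by exact_mod_cast hn
    set M := max (Real.exp (-(n : ℝ))) (F x) with hM
    have hMpos : 0 < M := lt_of_lt_of_le (Real.exp_pos _) (le_max_left _ _)
    rw [hkey n hn x]
    have : -((n : ℝ) * (1 - (1 + Real.log M / n))) = Real.log M := by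
      field_simp
      ring
    rw [this, Real.exp_log hMpos]
  refine ⟨?_, hid, ?_⟩
  · intro n hn
    have hn0 : (0 : ℝ) < n := by exact_mod_cast hn
    have hepos : (0 : ℝ) < Real.exp (-(n : ℝ)) := Real.exp_pos _
    refine ⟨?_, ?_, ?_, ?_⟩
    · intro a b hab
      rw [hkey n hn a, hkey n hn b]
      have hmax : max (Real.exp (-(n : ℝ))) (F a) ≤ max (Real.exp (-(n : ℝ))) (F b) :=
        max_le_max le_rfl (hmono hab)
      have hpos : 0 < max (Real.exp (-(n : ℝ))) (F a) :=
        lt_of_lt_of_le hepos (le_max_left _ _)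
      have := Real.log_le_log hpos hmax
      have := div_le_div_of_nonneg_right this hn0.le
      linarith
    · intro x
      have hφ : ContinuousAt
          (fun t : ℝ => 1 + Real.log (max (Real.exp (-(n : ℝ))) t) / n) (F x) := by
        have h1 : ContinuousAt (fun t : ℝ => max (Real.exp (-(n : ℝ))) t) (F x) :=
          (continuous_const.max continuous_id).continuousAt
        have h2 : ContinuousAt Real.log (max (Real.exp (-(n : ℝ))) (F x)) :=
          Real.continuousAt_log (ne_of_gt (lt_of_lt_of_le hepos (le_max_left _ _)))
        exact continuousAt_const.add ((h2.comp h1).div_const _)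
      refine (hφ.comp_continuousWithinAt (hrc x)).congr ?_ ?_
      · intro y _; exact hkey n hn y
      · exact hkey n hn x
    · have hφ : ContinuousAt
          (fun t : ℝ => 1 + Real.log (max (Real.exp (-(n : ℝ))) t) / n) 0 := by
        have h1 : ContinuousAt (fun t : ℝ => max (Real.exp (-(n : ℝ))) t) 0 :=
          (continuous_const.max continuous_id).continuousAt
        have h2 : ContinuousAt Real.log (max (Real.exp (-(n : ℝ))) 0) :=
          Real.continuousAt_log (ne_of_gt (lt_of_lt_of_le hepos (le_max_left _ _)))
        exact continuousAt_const.add ((h2.comp h1).div_const _)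
      have h3 := hφ.tendsto.comp hbot
      have h4 : (1 : ℝ) + Real.log (max (Real.exp (-(n : ℝ))) 0) / n = 0 := by
        rw [max_eq_left hepos.le, Real.log_exp]
        field_simp
        norm_num
      rw [h4] at h3
      exact h3.congr fun y => (hkey n hn y).symm
    · have hφ : ContinuousAt
          (fun t : ℝ => 1 + Real.log (max (Real.exp (-(n : ℝ))) t) / n) 1 := by
        have h1 : ContinuousAt (fun t : ℝ => max (Real.exp (-(n : ℝ))) t) 1 :=
          (continuous_const.max continuous_id).continuousAt
        have h2 : ContinuousAt Real.log (max (Real.exp (-(n : ℝ))) 1) :=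
          Real.continuousAt_log (ne_of_gt (lt_of_lt_of_le hepos (le_max_left _ _)))
        exact continuousAt_const.add ((h2.comp h1).div_const _)
      have h3 := hφ.tendsto.comp htop
      have hle1 : Real.exp (-(n : ℝ)) ≤ 1 := by
        rw [Real.exp_le_one_iff]
        simp
      have h4 : (1 : ℝ) + Real.log (max (Real.exp (-(n : ℝ))) 1) / n = 1 := by
        rw [max_eq_right hle1, Real.log_one]
        simp
      rw [h4] at h3
      exact h3.congr fun y => (hkey n hn y).symm
  · intro x
    have h1 : Tendsto (fun n : ℕ => Real.exp (-(n : ℝ))) atTop (𝓝 0) := by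
      have hnb : Tendsto (fun n : ℕ => -(n : ℝ)) atTop atBot :=
        tendsto_neg_atTop_atBot.comp tendsto_natCast_atTop_atTop
      exact Real.tendsto_exp_atBot.comp hnb
    have h2 : Tendsto (fun n : ℕ => max (Real.exp (-(n : ℝ))) (F x)) atTop
        (𝓝 (max 0 (F x))) :=
      ((continuous_id.max continuous_const).continuousAt).tendsto.comp h1
    rw [max_eq_right (hF0 x)] at h2
    refine h2.congr' ?_
    filter_upwards [eventually_ge_atTop 1] with n hn
    exact (hid n hn x).symm
end
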